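/- arXiv:1507.06910 — 9 statements merged into one kernel-verified Lean document; each statement's English description precedes it below -/
import Mathlib

section
/- Let A ⊆ B be an extension of commutative rings. There is an exact sequence 1 → U(A) → U(B) → 𝓘(A,B) → Pic(A) → Pic(B), where U denotes the group of units, 𝓘(A,B) is the group of invertible A-submodules of B, and Pic denotes the Picard group. Exactness at 𝓘(A,B) means: an invertible A-submodule L of B has trivial class in Pic(A) (i.e., L is a free A-module of rank 1) if and only if L = bA for some unit b of B; the map U(B) → 𝓘(A,B) sends b to the A-submodule bA. -/
set_option maxHeartbeats 1000000 in
set_option synthInstance.maxHeartbeats 400000 in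
/-- exactness of `1 → U(A) → U(B) → 𝓘(A,B) → Pic A → Pic B` for a
commutative ring extension `A ⊆ B`.  We record:
(i) exactness at `U(A)`: `U(A) → U(B)` is injective;
(ii) exactness at `U(B)`: `bA = A` iff `b` comes from a unit of `A`;
(iii) exactness at `𝓘(A,B)` (as the statement specifies): an invertible
`A`-submodule `L` of `B` is free of rank one over `A` (trivial class in `Pic A`)
if and only if `L = bA` for some unit `b` of `B`. -/
theorem stmt_1 {B : Type} [CommRing B] (A : Subring B) :
    (Function.Injective fun u : (↥A)ˣ => (((u : ↥A) : B))) ∧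
    (∀ b : Bˣ, Submodule.span A {(b : B)} = 1 ↔
      ∃ u : (↥A)ˣ, ((u : ↥A) : B) = (b : B)) ∧
    (∀ L : (Submodule A B)ˣ,
      Nonempty ((↥(L : Submodule A B)) ≃ₗ[A] ↥A) ↔
        ∃ b : Bˣ, (L : Submodule A B) = Submodule.span A {(b : B)}) := by
  have smul_def : ∀ (a : A) (x : B), a • x = (a : B) * x := fun _ _ => rfl
  have mem_one' : ∀ x : B, x ∈ (1 : Submodule A B) ↔ x ∈ A := by
    intro x
    rw [Submodule.mem_one]
    constructor
    · rintro ⟨y, rfl⟩; exact y.2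
    · intro hx; exact ⟨⟨x, hx⟩, rfl⟩
  refine ⟨?_, ?_, ?_⟩
  · intro u v h
    ext
    exact Subtype.ext_iff.mp (Subtype.ext h)
  · intro b
    constructor
    · intro h
      have hbA : (b : B) ∈ A := by
        have : (b : B) ∈ Submodule.span A {(b : B)} := Submodule.mem_span_singleton_self (b : B)
        rw [h, mem_one'] at this
        exact this
      have h1 : (1 : B) ∈ Submodule.span A {(b : B)} := by
        rw [h, mem_one']; exact one_mem A
      rcases Submodule.mem_span_singleton.mp h1 with ⟨a, ha⟩
      rw [smul_def] at ha
      refine ⟨⟨⟨(b : B), hbA⟩, a, ?_, ?_⟩, rfl⟩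
      · exact Subtype.ext (by simpa [mul_comm] using ha)
      · exact Subtype.ext ha
    · rintro ⟨u, hu⟩
      apply le_antisymm
      · rw [Submodule.span_singleton_le_iff_mem, mem_one']
        rw [← hu]; exact (u : A).2
      · intro x hx
        rw [mem_one'] at hx
        rw [Submodule.mem_span_singleton]
        refine ⟨⟨x, hx⟩ * ↑u⁻¹, ?_⟩
        rw [smul_def, ← hu]
        push_cast
        have : ((↑u⁻¹ : A) : B) * ((u : A) : B) = 1 := by
          have := u.inv_mul
          exact_mod_cast congrArg (fun t : A => (t : B)) this
        rw [mul_assoc, this, mul_one]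
  · intro L
    constructor
    · rintro ⟨e⟩
      set b₀ : ↥(L : Submodule A B) := e.symm 1 with hb₀
      have hL : (L : Submodule A B) = Submodule.span A {(b₀ : B)} := by
        apply le_antisymm
        · intro x hx
          have hx' : (⟨x, hx⟩ : ↥(L : Submodule A B)) = e ⟨x, hx⟩ • b₀ := by
            conv_lhs => rw [← e.symm_apply_apply ⟨x, hx⟩]
            rw [hb₀, ← map_smul, smul_eq_mul, mul_one]
          have : x = e ⟨x, hx⟩ • (b₀ : B) := by
            rw [← Submodule.coe_smul, ← hx']
          rw [this]
          exact Submodule.smul_mem _ _ (Submodule.mem_span_singleton_self _)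
        · rw [Submodule.span_singleton_le_iff_mem]; exact b₀.2
      have hmul : (L : Submodule A B) * ((L⁻¹ : (Submodule A B)ˣ) : Submodule A B) = 1 :=
        L.mul_inv
      rw [hL] at hmul
      have h1 : (1 : B) ∈ Submodule.span A {(b₀ : B)} *
          ((L⁻¹ : (Submodule A B)ˣ) : Submodule A B) := by
        rw [hmul, mem_one']; exact one_mem A
      have key : ∀ x ∈ Submodule.span A {(b₀ : B)} *
          ((L⁻¹ : (Submodule A B)ˣ) : Submodule A B), ∃ c : B, x = (b₀ : B) * c := by
        intro x hx
        refine Submodule.mul_induction_on hx ?_ ?_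
        · intro m hm n _
          rcases Submodule.mem_span_singleton.mp hm with ⟨a, rfl⟩
          exact ⟨(a : B) * n, by rw [smul_def]; ring⟩
        · rintro x y ⟨c, rfl⟩ ⟨d, rfl⟩
          exact ⟨c + d, by ring⟩
      rcases key 1 h1 with ⟨c, hc⟩
      have hu : IsUnit ((b₀ : B)) := IsUnit.of_mul_eq_one c hc.symm
      exact ⟨hu.unit, by simp only [IsUnit.unit_spec]; exact hL⟩
    · rintro ⟨b, hL⟩
      have hinj : Function.Injective (LinearMap.toSpanSingleton A B (b : B)) := by
        intro a a' h
        simp only [LinearMap.toSpanSingleton_apply, smul_def] at h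
        have : ((a : B)) = ((a' : B)) := by
          have := congrArg (fun t => t * ((b⁻¹ : Bˣ) : B)) h
          simpa [mul_assoc] using this
        exact Subtype.ext this
      have hrange : Submodule.span A {(b : B)} =
          LinearMap.range (LinearMap.toSpanSingleton A B (b : B)) :=
        (LinearMap.span_singleton_eq_range A B (b : B))
      have e1 : ↥(L : Submodule A B) ≃ₗ[A]
          ↥(LinearMap.range (LinearMap.toSpanSingleton A B (b : B))) :=
        LinearEquiv.ofEq _ _ (by rw [hL, hrange])
      exact ⟨e1.trans (LinearEquiv.ofInjective _ hinj).symm⟩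
end

section
/- Let A ⊆ B be an extension of commutative rings and let 𝔞 be an ideal of B contained in A. Then the natural map 𝓘(A,B) → 𝓘(A/𝔞, B/𝔞) induced by reduction mod 𝔞 is a group isomorphism. -/
open Submodule Pointwise

section Aux
variable {B : Type} [CommRing B] (A : Subring B) (I : Ideal B)

/-- the induced ring hom `A → A.map (mk I)` -/
noncomputable def rho : A →+* (A.map (Ideal.Quotient.mk I)) :=
  ((Ideal.Quotient.mk I).comp A.subtype).codRestrict _ (fun a => ⟨a, a.2, rfl⟩)

lemma rho_surj : Function.Surjective (rho A I) := by
  rintro ⟨y, a, ha, rfl⟩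
  exact ⟨⟨a, ha⟩, Subtype.ext rfl⟩

noncomputable instance : RingHomSurjective (rho A I) := ⟨rho_surj A I⟩

/-- `mk I` as a semilinear map. -/
noncomputable def pisl : B →ₛₗ[rho A I] (B ⧸ I) where
  toFun := Ideal.Quotient.mk I
  map_add' := by simp
  map_smul' a b := rfl

@[simp] lemma pisl_apply (b : B) : pisl A I b = Ideal.Quotient.mk I b := rfl

lemma pisl_surj : Function.Surjective (pisl A I) := Ideal.Quotient.mk_surjective

end Aux

section Aux2
variable {B : Type} [CommRing B] (A : Subring B) (I : Ideal B)

lemma map_pisl_mul (M N : Submodule A B) :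
    (M * N).map (pisl A I) = M.map (pisl A I) * N.map (pisl A I) := by
  conv_lhs => rw [← span_eq M, ← span_eq N, span_mul_span, Submodule.map_span]
  rw [show ⇑(pisl A I) '' (↑M * ↑N) = (⇑(pisl A I) '' ↑M) * (⇑(pisl A I) '' ↑N) from
    Set.image_mul (Ideal.Quotient.mk I)]
  rw [← span_mul_span, ← Submodule.map_span, ← Submodule.map_span, span_eq, span_eq]

/-- reduction mod I as a monoid hom on submodules -/
noncomputable def mapHom : Submodule A B →* Submodule (A.map (Ideal.Quotient.mk I)) (B ⧸ I) where
  toFun L := L.map (pisl A I)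
  map_one' := by
    show Submodule.map (pisl A I) _ = _
    rw [one_eq_span, Submodule.map_span, Set.image_singleton, pisl_apply, map_one,
      ← one_eq_span]
  map_mul' := map_pisl_mul A I

@[simp] lemma mapHom_coe (L : Submodule A B) :
    (mapHom A I L : Set (B ⧸ I)) = Ideal.Quotient.mk I '' (L : Set B) := rfl

end Aux2

section Aux3
variable {B : Type} [CommRing B] (A : Subring B) (I : Ideal B)

lemma ideal_subset_unit (hI : (I : Set B) ⊆ (A : Set B)) (L : (Submodule A B)ˣ) {t : B} (ht : t ∈ I) :
    t ∈ (L : Submodule A B) := by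
  have h1 : (1 : B) ∈ (((L⁻¹ : (Submodule A B)ˣ) : Submodule A B) * (L : Submodule A B)) := by
    rw [← Units.val_mul, inv_mul_cancel, Units.val_one]
    exact Submodule.mem_one.mpr ⟨1, map_one _⟩
  have key : t * (1 : B) ∈ (L : Submodule A B) := by
    refine Submodule.mul_induction_on h1 ?_ ?_
    · intro m hm n hn
      have htm : t * m ∈ I := I.mul_mem_right m ht
      have : t * (m * n) = (⟨t * m, hI htm⟩ : A) • n := by
        show _ = (t * m) * n; ring
      rw [this]
      exact Submodule.smul_mem _ _ hn
    · intro x y hx hy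
      simpa [mul_add] using add_mem hx hy
  simpa using key

lemma map_comap_pisl (p : Submodule (A.map (Ideal.Quotient.mk I)) (B ⧸ I)) :
    (p.comap (pisl A I)).map (pisl A I) = p := by
  ext x
  simp only [Submodule.mem_map, Submodule.mem_comap]
  constructor
  · rintro ⟨y, hy, rfl⟩; exact hy
  · intro hx
    obtain ⟨y, rfl⟩ := pisl_surj A I x
    exact ⟨y, hx, rfl⟩

lemma unit_le (hI : (I : Set B) ⊆ (A : Set B)) (u v : (Submodule A B)ˣ)
    (h : (u : Submodule A B).map (pisl A I) = (v : Submodule A B).map (pisl A I)) :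
    (u : Submodule A B) ≤ (v : Submodule A B) := by
  intro x hx
  have hx' : pisl A I x ∈ (v : Submodule A B).map (pisl A I) :=
    h ▸ Submodule.mem_map_of_mem hx
  obtain ⟨y, hy, hxy⟩ := hx'
  have hxyI : x - y ∈ I := by
    rw [← Ideal.Quotient.eq]
    exact hxy.symm
  have : x = y + (x - y) := by ring
  rw [this]
  exact add_mem hy (ideal_subset_unit A I hI v hxyI)

lemma comap_mul_comap (hI : (I : Set B) ⊆ (A : Set B)) (M : (Submodule (A.map (Ideal.Quotient.mk I)) (B ⧸ I))ˣ) :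
    (M : Submodule (A.map (Ideal.Quotient.mk I)) (B ⧸ I)).comap (pisl A I) *
      ((M⁻¹ : (Submodule (A.map (Ideal.Quotient.mk I)) (B ⧸ I))ˣ) :
        Submodule (A.map (Ideal.Quotient.mk I)) (B ⧸ I)).comap (pisl A I) = 1 := by
  set K := (M : Submodule (A.map (Ideal.Quotient.mk I)) (B ⧸ I)).comap (pisl A I) with hK
  set K' := ((M⁻¹ : (Submodule (A.map (Ideal.Quotient.mk I)) (B ⧸ I))ˣ) :
    Submodule (A.map (Ideal.Quotient.mk I)) (B ⧸ I)).comap (pisl A I) with hK'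
  have hIK : ∀ t ∈ I, t ∈ K := fun t ht => by
    simp only [hK, Submodule.mem_comap, pisl_apply]
    rw [Ideal.Quotient.eq_zero_iff_mem.mpr ht]
    exact zero_mem _
  have hIK' : ∀ t ∈ I, t ∈ K' := fun t ht => by
    simp only [hK', Submodule.mem_comap, pisl_apply]
    rw [Ideal.Quotient.eq_zero_iff_mem.mpr ht]
    exact zero_mem _
  have hmap : (K * K').map (pisl A I) = 1 := by
    rw [map_pisl_mul, map_comap_pisl, map_comap_pisl, ← Units.val_mul, mul_inv_cancel,
      Units.val_one]
  -- find z ∈ K * K' with mk z = 1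
  have h1mem : (1 : B ⧸ I) ∈ (K * K').map (pisl A I) := by
    rw [hmap]; exact Submodule.mem_one.mpr ⟨1, map_one _⟩
  obtain ⟨z, hz, hz1⟩ := h1mem
  have h1z : (1 : B) - z ∈ I := by
    rw [← Ideal.Quotient.eq]
    simpa using hz1.symm
  have hIKK' : ∀ t ∈ I, t ∈ K * K' := by
    intro t ht
    have h1 : t * z ∈ K * K' := by
      refine Submodule.mul_induction_on hz ?_ ?_
      · intro m hm n hn
        have htm : t * m ∈ I := I.mul_mem_right m ht
        have : t * (m * n) = (t * m) * n := by ring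
        rw [this]
        exact Submodule.mul_mem_mul (hIK _ htm) hn
      · intro x y hx hy
        simpa [mul_add] using add_mem hx hy
    have h2 : t * (1 - z) ∈ K * K' :=
      Submodule.mul_mem_mul (hIK t ht) (hIK' _ h1z)
    have : t = t * z + t * (1 - z) := by ring
    rw [this]
    exact add_mem h1 h2
  have hone : (1 : B) ∈ K * K' := by
    have : (1 : B) = z + (1 - z) := by ring
    rw [this]
    exact add_mem hz (hIKK' _ h1z)
  refine le_antisymm ?_ ?_
  · -- K * K' ≤ 1
    intro x hx
    have hx' : pisl A I x ∈ (1 : Submodule (A.map (Ideal.Quotient.mk I)) (B ⧸ I)) := by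
      rw [← hmap]; exact Submodule.mem_map_of_mem hx
    obtain ⟨⟨y, a, ha, hay⟩, hyx⟩ := Submodule.mem_one.mp hx'
    have hax : a - x ∈ I := by
      rw [← Ideal.Quotient.eq, hay]
      exact hyx
    have hxA : x ∈ A := by
      have : x = a - (a - x) := by ring
      rw [this]
      exact sub_mem ha (hI hax)
    exact Submodule.mem_one.mpr ⟨⟨x, hxA⟩, rfl⟩
  · -- 1 ≤ K * K'
    intro x hx
    obtain ⟨a, ha⟩ := Submodule.mem_one.mp hx
    have h2 : (a : A) • (1 : B) ∈ K * K' := Submodule.smul_mem _ _ hone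
    have h3 : (a : A) • (1 : B) = x := by
      rw [← ha]; show (a : B) * 1 = (a : B); ring
    rwa [h3] at h2

end Aux3

set_option maxHeartbeats 1000000 in
lemma surj_aux {B : Type} [CommRing B] (A : Subring B) (I : Ideal B)
    (hI : (I : Set B) ⊆ (A : Set B)) :
    Function.Surjective (Units.map (mapHom A I : Submodule A B →* _)) := by
  intro M
  have h1 := comap_mul_comap A I hI M
  have h2 : ((M⁻¹ : (Submodule (A.map (Ideal.Quotient.mk I)) (B ⧸ I))ˣ) :
      Submodule _ _).comap (pisl A I) *
      (M : Submodule (A.map (Ideal.Quotient.mk I)) (B ⧸ I)).comap (pisl A I) = 1 := by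
    rw [mul_comm]; exact h1
  refine ⟨Units.mk _ _ h1 h2, Units.ext ?_⟩
  show mapHom A I ((M : Submodule (A.map (Ideal.Quotient.mk I)) (B ⧸ I)).comap (pisl A I)) =
    (M : Submodule (A.map (Ideal.Quotient.mk I)) (B ⧸ I))
  exact map_comap_pisl A I _

lemma inj_aux {B : Type} [CommRing B] (A : Subring B) (I : Ideal B)
    (hI : (I : Set B) ⊆ (A : Set B)) :
    Function.Injective (Units.map (mapHom A I : Submodule A B →* _)) := by
  intro u v huv
  have h : mapHom A I (u : Submodule A B) = mapHom A I (v : Submodule A B) :=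
    congrArg Units.val huv
  exact Units.ext (le_antisymm (unit_le A I hI u v h) (unit_le A I hI v u h.symm))

/-- let `A ⊆ B` be a commutative ring extension and `𝔞` an ideal of `B`
contained in `A`.  Then reduction mod `𝔞` induces a group isomorphism
`𝓘(A,B) ≅ 𝓘(A/𝔞, B/𝔞)`, sending an invertible `A`-submodule `L` of `B` to its image
in `B/𝔞`. -/
theorem stmt_5 {B : Type} [CommRing B] (A : Subring B) (I : Ideal B)
    (hI : (I : Set B) ⊆ (A : Set B)) :
    ∃ e : (Submodule A B)ˣ ≃* (Submodule (A.map (Ideal.Quotient.mk I)) (B ⧸ I))ˣ,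
      ∀ L : (Submodule A B)ˣ,
        ((e L : Submodule (A.map (Ideal.Quotient.mk I)) (B ⧸ I)) : Set (B ⧸ I)) =
          (Ideal.Quotient.mk I) '' ((L : Submodule A B) : Set B) := by
  refine ⟨MulEquiv.ofBijective (Units.map (mapHom A I : Submodule A B →* _))
    ⟨inj_aux A I hI, surj_aux A I hI⟩, fun L => ?_⟩
  show ((Units.map (mapHom A I : Submodule A B →* _) L :
    Submodule (A.map (Ideal.Quotient.mk I)) (B ⧸ I)) : Set (B ⧸ I)) = _
  show ((mapHom A I (L : Submodule A B)) : Set (B ⧸ I)) = _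
  rw [mapHom_coe]
end

section
/- Let A = ∏ᵢ₌₁ⁿ Aᵢ and B = ∏ᵢ₌₁ⁿ Bᵢ be finite products of commutative rings, where each Aᵢ is a subring of Bᵢ. Then the natural map 𝓘(A,B) → ∏ᵢ 𝓘(Aᵢ,Bᵢ) is a group isomorphism. -/
set_option maxHeartbeats 1000000
set_option synthInstance.maxHeartbeats 400000

/-- The product subring `∏ᵢ Aᵢ` of `∏ᵢ Bᵢ`. -/
def SubringPi {n : ℕ} {B : Fin n → Type} [∀ i, CommRing (B i)]
    (A : ∀ i, Subring (B i)) : Subring (∀ i, B i) where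
  carrier := {f | ∀ i, f i ∈ A i}
  one_mem' := fun i => (A i).one_mem
  zero_mem' := fun i => (A i).zero_mem
  mul_mem' := fun hf hg i => (A i).mul_mem (hf i) (hg i)
  add_mem' := fun hf hg i => (A i).add_mem (hf i) (hg i)
  neg_mem' := fun hf i => (A i).neg_mem (hf i)

namespace Stmt6Aux

variable {n : ℕ} {B : Fin n → Type} [∀ i, CommRing (B i)] (A : ∀ i, Subring (B i))

/-- extend an element of `B i` by zero. -/
def single (i : Fin n) (x : B i) : ∀ j, B j := Function.update 0 i x

lemma single_apply_same (i : Fin n) (x : B i) : single i x i = x := by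
  simp [single]

lemma single_apply_ne {i j : Fin n} (h : j ≠ i) (x : B i) : single i x j = 0 := by
  simp [single, Function.update_of_ne h]

lemma single_mem {i : Fin n} {x : B i} (hx : x ∈ A i) : single i x ∈ SubringPi A := by
  intro j
  rcases eq_or_ne j i with rfl | h
  · rw [single_apply_same]; exact hx
  · rw [single_apply_ne h]; exact (A j).zero_mem

lemma single_add (i : Fin n) (x y : B i) :
    single i (x + y) = single i x + single i y := by
  funext j
  rcases eq_or_ne j i with rfl | h
  · simp [single_apply_same]
  · simp [single_apply_ne h]

lemma single_mul (i : Fin n) (x y : B i) :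
    single i x * single i y = single i (x * y) := by
  funext j
  rcases eq_or_ne j i with rfl | h
  · simp [single_apply_same]
  · simp [single_apply_ne h]

lemma single_mul_fn (i : Fin n) (x : B i) (f : ∀ j, B j) :
    single i x * f = single i (x * f i) := by
  funext j
  rcases eq_or_ne j i with rfl | h
  · simp [single_apply_same]
  · simp [single_apply_ne h]

lemma sum_single (f : ∀ j, B j) : ∑ i, single i (f i) = f := by
  funext j
  rw [Finset.sum_apply]
  have : ∀ i ∈ Finset.univ, single i (f i) j = if j = i then f j else 0 := by
    intro i _
    rcases eq_or_ne j i with rfl | h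
    · simp [single_apply_same]
    · simp [single_apply_ne h, h]
  rw [Finset.sum_congr rfl this, Finset.sum_ite_eq]
  simp

/-- projection of a submodule of the product to the `i`-th component. -/
def toPi (M : Submodule (SubringPi A) (∀ i, B i)) (i : Fin n) : Submodule (A i) (B i) where
  carrier := (fun f : ∀ j, B j => f i) '' (M : Set (∀ j, B j))
  add_mem' := by
    intro x y hx hy
    obtain ⟨f, hf, rfl⟩ := hx
    obtain ⟨g, hg, rfl⟩ := hy
    exact ⟨f + g, M.add_mem hf hg, rfl⟩
  zero_mem' := ⟨0, M.zero_mem, rfl⟩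
  smul_mem' := by
    intro a x hx
    obtain ⟨f, hf, rfl⟩ := hx
    refine ⟨(⟨single i (a : B i), single_mem A a.2⟩ : SubringPi A) • f,
      M.smul_mem _ hf, ?_⟩
    show single i (a : B i) i * f i = (a : B i) * f i
    rw [single_apply_same]

lemma mem_toPi {M : Submodule (SubringPi A) (∀ i, B i)} {i : Fin n} {x : B i} :
    x ∈ toPi A M i ↔ ∃ f ∈ M, f i = x := by exact Iff.rfl

/-- the product submodule. -/
def ofPi (N : ∀ i, Submodule (A i) (B i)) : Submodule (SubringPi A) (∀ i, B i) where
  carrier := {f | ∀ i, f i ∈ N i}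
  add_mem' := by
    intro f g hf hg i
    exact (N i).add_mem (hf i) (hg i)
  zero_mem' := fun i => (N i).zero_mem
  smul_mem' := by
    intro a f hf i
    exact (N i).smul_mem ⟨a.1 i, a.2 i⟩ (hf i)

lemma mem_ofPi {N : ∀ i, Submodule (A i) (B i)} {f : ∀ j, B j} :
    f ∈ ofPi A N ↔ ∀ i, f i ∈ N i := by exact Iff.rfl

lemma toPi_ofPi (N : ∀ i, Submodule (A i) (B i)) : toPi A (ofPi A N) = N := by
  funext i
  ext x
  rw [mem_toPi]
  constructor
  · rintro ⟨f, hf, rfl⟩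
    exact hf i
  · intro hx
    refine ⟨single i x, fun j => ?_, single_apply_same i x⟩
    rcases eq_or_ne j i with rfl | h
    · rw [single_apply_same]; exact hx
    · rw [single_apply_ne h]; exact (N j).zero_mem

lemma ofPi_toPi (M : Submodule (SubringPi A) (∀ i, B i)) : ofPi A (toPi A M) = M := by
  ext f
  rw [mem_ofPi]
  constructor
  · intro hf
    simp only [mem_toPi] at hf
    choose g hg hgi using hf
    have key : f = ∑ i, (⟨single i 1, single_mem A (A i).one_mem⟩ : SubringPi A) • g i := by
      have h1 : ∀ i, (⟨single i (1 : B i), single_mem A (A i).one_mem⟩ : SubringPi A) • g i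
          = single i (f i) := by
        intro i
        show single i (1 : B i) * g i = _
        rw [single_mul_fn, one_mul, hgi]
      rw [funext h1, sum_single]
    rw [key]
    exact Submodule.sum_mem M fun i _ => M.smul_mem _ (hg i)
  · intro hf i
    exact ⟨f, hf, rfl⟩

lemma ofPi_mul (P Q : ∀ i, Submodule (A i) (B i)) :
    ofPi A (P * Q) = ofPi A P * ofPi A Q := by
  have key : ∀ (i : Fin n) (x : B i), x ∈ P i * Q i →
      single i x ∈ ofPi A P * ofPi A Q := by
    intro i x hx
    refine Submodule.mul_induction_on
      (C := fun x => single i x ∈ ofPi A P * ofPi A Q) hx ?_ ?_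
    · intro p hp q hq
      rw [← single_mul]
      refine Submodule.mul_mem_mul ((mem_ofPi A).2 fun j => ?_)
        ((mem_ofPi A).2 fun j => ?_)
      · rcases eq_or_ne j i with rfl | h
        · rw [single_apply_same]; exact hp
        · rw [single_apply_ne h]; exact (P j).zero_mem
      · rcases eq_or_ne j i with rfl | h
        · rw [single_apply_same]; exact hq
        · rw [single_apply_ne h]; exact (Q j).zero_mem
    · intro x y hx hy
      rw [single_add]
      exact Submodule.add_mem _ hx hy
  apply le_antisymm
  · intro f hf
    rw [← sum_single f]
    exact Submodule.sum_mem _ fun i _ => key i (f i) ((mem_ofPi A).1 hf i)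
  · rw [Submodule.mul_le]
    intro f hf g hg
    exact (mem_ofPi A).2 fun i =>
      Submodule.mul_mem_mul ((mem_ofPi A).1 hf i) ((mem_ofPi A).1 hg i)

/-- units of a pi monoid. -/
def piUnits {ι : Type*} {M : ι → Type*} [∀ i, Monoid (M i)] :
    (∀ i, M i)ˣ ≃* ∀ i, (M i)ˣ where
  toFun u i := ⟨u.1 i, u.2 i, congrFun u.3 i, congrFun u.4 i⟩
  invFun u := ⟨fun i => u i, fun i => ↑(u i)⁻¹,
    funext fun i => (u i).mul_inv, funext fun i => (u i).inv_mul⟩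
  left_inv _ := Units.ext rfl
  right_inv _ := funext fun _ => Units.ext rfl
  map_mul' _ _ := funext fun _ => Units.ext rfl

/-- the mul equiv on submodule monoids. -/
def submoduleEquiv :
    Submodule (SubringPi A) (∀ i, B i) ≃* ∀ i, Submodule (A i) (B i) :=
  MulEquiv.symm
    { toFun := ofPi A
      invFun := toPi A
      left_inv := toPi_ofPi A
      right_inv := ofPi_toPi A
      map_mul' := fun P Q => ofPi_mul A P Q }

end Stmt6Aux

/-- for finite products `A = ∏ᵢ Aᵢ ⊆ B = ∏ᵢ Bᵢ` of commutative ring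
extensions, the natural componentwise map `𝓘(A,B) → ∏ᵢ 𝓘(Aᵢ,Bᵢ)` is a group
isomorphism. -/
theorem stmt_6 {n : ℕ} {B : Fin n → Type} [∀ i, CommRing (B i)]
    (A : ∀ i, Subring (B i)) :
    ∃ e : (Submodule (SubringPi A) (∀ i, B i))ˣ ≃* (∀ i, (Submodule (A i) (B i))ˣ),
      ∀ (M : (Submodule (SubringPi A) (∀ i, B i))ˣ) (i : Fin n),
        ((e M i : Submodule (A i) (B i)) : Set (B i)) =
          (fun f : ∀ j, B j => f i) '' ((M : Submodule (SubringPi A) (∀ i, B i)) : Set (∀ i, B i)) := by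
  refine ⟨(Units.mapEquiv (Stmt6Aux.submoduleEquiv A)).trans Stmt6Aux.piUnits, ?_⟩
  intro M i
  rfl
end

section
/- Let A ⊆ B be a filtered union of extensions Aλ ⊆ Bλ (i.e., A = ⋃λ Aλ, B = ⋃λ Bλ over a directed index set with compatible inclusions). Then 𝓘(A,B) is the filtered colimit of the groups 𝓘(Aλ,Bλ). -/
open scoped Pointwise

lemma aux_spanSpan {B : Type} [CommRing B] {R₁ R₂ : Subring B} (h : R₁ ≤ R₂) (s : Set B) :
    Submodule.span R₂ ((Submodule.span R₁ s : Submodule R₁ B) : Set B) = Submodule.span R₂ s := by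
  refine le_antisymm (Submodule.span_le.mpr ?_) (Submodule.span_mono Submodule.subset_span)
  intro x hx
  rw [SetLike.mem_coe] at hx
  induction hx using Submodule.span_induction with
  | mem y hy => exact Submodule.subset_span hy
  | zero => exact Submodule.zero_mem _
  | add y z _ _ hy hz => exact Submodule.add_mem _ hy hz
  | smul a y _ hy =>
      have : a • y = (⟨(a : B), h a.2⟩ : R₂) • y := rfl
      rw [this]
      exact Submodule.smul_mem _ _ hy

lemma aux_fg {R S : Type} [CommRing R] [CommRing S] [Algebra R S] (u : (Submodule R S)ˣ) :
    ∃ T T' : Finset S,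
      (u : Submodule R S) = Submodule.span R (↑T : Set S) ∧
      ((u⁻¹ : (Submodule R S)ˣ) : Submodule R S) = Submodule.span R (↑T' : Set S) ∧
      (1 : S) ∈ Submodule.span R ((↑T : Set S) * (↑T' : Set S)) := by
  have hmul : (u : Submodule R S) * ((u⁻¹ : (Submodule R S)ˣ) : Submodule R S) = 1 := by
    rw [← Units.val_mul, mul_inv_cancel, Units.val_one]
  have h1 : (1 : S) ∈ (u : Submodule R S) * ((u⁻¹ : (Submodule R S)ˣ) : Submodule R S) := by
    rw [hmul]; exact Submodule.one_le.mp le_rfl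
  obtain ⟨T, T', hT, hT', hmem⟩ := Submodule.mem_span_mul_finite_of_mem_mul h1
  have hTle : Submodule.span R (↑T : Set S) ≤ (u : Submodule R S) := Submodule.span_le.mpr hT
  have hT'le : Submodule.span R (↑T' : Set S) ≤ ((u⁻¹ : (Submodule R S)ˣ) : Submodule R S) :=
    Submodule.span_le.mpr hT'
  have hone : (1 : Submodule R S) ≤ Submodule.span R (↑T : Set S) * Submodule.span R (↑T' : Set S) := by
    rw [Submodule.span_mul_span]; exact Submodule.one_le.mpr hmem
  refine ⟨T, T', ?_, ?_, hmem⟩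
  · refine le_antisymm ?_ hTle
    calc (u : Submodule R S) = (u : Submodule R S) * 1 := (mul_one _).symm
      _ ≤ (u : Submodule R S) * (Submodule.span R (↑T' : Set S) * Submodule.span R (↑T : Set S)) :=
          mul_le_mul' le_rfl (by rw [mul_comm]; exact hone)
      _ = ((u : Submodule R S) * Submodule.span R (↑T' : Set S)) * Submodule.span R (↑T : Set S) :=
          (mul_assoc _ _ _).symm
      _ ≤ ((u : Submodule R S) * ((u⁻¹ : (Submodule R S)ˣ) : Submodule R S)) * Submodule.span R (↑T : Set S) :=
          mul_le_mul' (mul_le_mul' le_rfl hT'le) le_rfl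
      _ = Submodule.span R (↑T : Set S) := by rw [hmul, one_mul]
  · refine le_antisymm ?_ hT'le
    calc ((u⁻¹ : (Submodule R S)ˣ) : Submodule R S)
        = ((u⁻¹ : (Submodule R S)ˣ) : Submodule R S) * 1 := (mul_one _).symm
      _ ≤ ((u⁻¹ : (Submodule R S)ˣ) : Submodule R S) *
            (Submodule.span R (↑T : Set S) * Submodule.span R (↑T' : Set S)) :=
          mul_le_mul' le_rfl hone
      _ = (((u⁻¹ : (Submodule R S)ˣ) : Submodule R S) * Submodule.span R (↑T : Set S)) *
            Submodule.span R (↑T' : Set S) := (mul_assoc _ _ _).symm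
      _ ≤ (((u⁻¹ : (Submodule R S)ˣ) : Submodule R S) * (u : Submodule R S)) *
            Submodule.span R (↑T' : Set S) :=
          mul_le_mul' (mul_le_mul' le_rfl hTle) le_rfl
      _ = Submodule.span R (↑T' : Set S) := by
          rw [mul_comm _ (u : Submodule R S), hmul, one_mul]

set_option maxHeartbeats 2000000 in
/-- if `A ⊆ B` is the filtered union of extensions `Aλ ⊆ Bλ`, then
`𝓘(A,B)` is the filtered colimit of the groups `𝓘(Aλ,Bλ)`.  Concretely:
(i) every invertible `A`-submodule of `B` is extended from some level `λ`, and
(ii) if two invertible submodules at level `i` become equal in `𝓘(A,B)`, then they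
become equal at some level `j ≥ i`. -/
theorem stmt_7 {B ι : Type} [CommRing B] [Preorder ι] [IsDirected ι (· ≤ ·)]
    [Nonempty ι] (A : Subring B) (A' B' : ι → Subring B)
    (hmonoA : Monotone A') (hmonoB : Monotone B') (hAB : ∀ i, A' i ≤ B' i)
    (hA : (⨆ i, A' i) = A) (hB : (⨆ i, B' i) = ⊤) :
    letI : ∀ i, Algebra (A' i) (B' i) := fun i => (Subring.inclusion (hAB i)).toAlgebra
    (∀ L : (Submodule A B)ˣ, ∃ (i : ι) (M : (Submodule (A' i) (B' i))ˣ),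
        (L : Submodule A B) =
          Submodule.span A (Subtype.val '' ((M : Submodule (A' i) (B' i)) : Set (B' i)))) ∧
    (∀ (i : ι) (M N : (Submodule (A' i) (B' i))ˣ),
        Submodule.span A (Subtype.val '' ((M : Submodule (A' i) (B' i)) : Set (B' i))) =
          Submodule.span A (Subtype.val '' ((N : Submodule (A' i) (B' i)) : Set (B' i))) →
        ∃ (j : ι) (hij : i ≤ j),
          Submodule.span (A' j)
              (Subring.inclusion (hmonoB hij) '' ((M : Submodule (A' i) (B' i)) : Set (B' i))) =
            Submodule.span (A' j)
              (Subring.inclusion (hmonoB hij) '' ((N : Submodule (A' i) (B' i)) : Set (B' i)))) := by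
  classical
  have hAle : ∀ i, A' i ≤ A := fun i => (le_iSup A' i).trans hA.le
  have keyA : ∀ x : B, ∃ i, x ∈ A → x ∈ A' i := by
    intro x
    by_cases hx : x ∈ A
    · have : x ∈ ⨆ i, A' i := by rw [hA]; exact hx
      obtain ⟨i, hi⟩ := (Subring.mem_iSup_of_directed hmonoA.directed_le).mp this
      exact ⟨i, fun _ => hi⟩
    · exact ⟨Classical.arbitrary ι, fun h => absurd h hx⟩
  choose fA hfA using keyA
  have keyB : ∀ x : B, ∃ i, x ∈ B' i := fun x =>
    (Subring.mem_iSup_of_directed hmonoB.directed_le).mp (by rw [hB]; trivial)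
  choose fB hfB using keyB
  constructor
  · -- part (i)
    intro L
    have hmulL : (L : Submodule A B) * ((L⁻¹ : (Submodule A B)ˣ) : Submodule A B) = 1 := by
      rw [← Units.val_mul, mul_inv_cancel, Units.val_one]
    obtain ⟨T, T', hT, hT', hone⟩ := aux_fg L
    obtain ⟨c, hcsupp, hcsum⟩ := Submodule.mem_span_set.mp hone
    obtain ⟨i, hi⟩ := Finset.exists_le
      (((T ∪ T').image fB ∪ (T * T').image fA) ∪ c.support.image (fun b => fA ((c b : B))))
    -- elements of T ∪ T' are in B' i
    have hTB : ∀ t ∈ (↑(T ∪ T') : Set B), t ∈ B' i := by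
      intro t ht
      refine hmonoB (hi _ ?_) (hfB t)
      exact Finset.mem_union_left _ (Finset.mem_union_left _ (Finset.mem_image_of_mem fB ht))
    -- products are in A' i
    have hprodA : ∀ x ∈ (T * T' : Finset B), x ∈ A' i := by
      intro x hx
      have hxA : x ∈ A := by
        rw [Finset.mem_mul] at hx
        obtain ⟨y, hy, z, hz, rfl⟩ := hx
        have hy' : y ∈ (L : Submodule A B) := by rw [hT]; exact Submodule.subset_span hy
        have hz' : z ∈ ((L⁻¹ : (Submodule A B)ˣ) : Submodule A B) := by
          rw [hT']; exact Submodule.subset_span hz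
        have := Submodule.mul_mem_mul hy' hz'
        rw [hmulL] at this
        obtain ⟨a, ha⟩ := Submodule.mem_one.mp this
        exact ha ▸ a.2
      refine hmonoA (hi _ ?_) (hfA x hxA)
      exact Finset.mem_union_left _ (Finset.mem_union_right _ (Finset.mem_image_of_mem fA hx))
    -- coefficients are in A' i
    have hcA : ∀ b ∈ c.support, (c b : B) ∈ A' i := by
      intro b hb
      refine hmonoA (hi _ ?_) (hfA _ (c b).2)
      exact Finset.mem_union_right _ (Finset.mem_image_of_mem _ hb)
    letI : Algebra (A' i) (B' i) := (Subring.inclusion (hAB i)).toAlgebra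
    let g : (B' i) →ₐ[A' i] B :=
      { toFun := Subtype.val, map_one' := rfl, map_mul' := fun _ _ => rfl,
        map_zero' := rfl, map_add' := fun _ _ => rfl, commutes' := fun _ => rfl }
    -- spans in B over A' i
    have hPQ : Submodule.span (A' i) (↑T : Set B) * Submodule.span (A' i) (↑T' : Set B) = 1 := by
      refine le_antisymm ?_ ?_
      · rw [Submodule.span_mul_span, Submodule.span_le]
        intro x hx
        rw [← Finset.coe_mul, Finset.mem_coe] at hx
        exact SetLike.mem_coe.mpr (Submodule.mem_one.mpr ⟨⟨x, hprodA x hx⟩, rfl⟩)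
      · rw [Submodule.span_mul_span, Submodule.one_le, ← hcsum]
        refine Submodule.finsuppSum_mem _ _ c _ fun b hb => ?_
        have hb' : b ∈ c.support := Finsupp.mem_support_iff.mpr hb
        have hcb : (c b) • b = (⟨((c b : B)), hcA b hb'⟩ : A' i) • b := rfl
        rw [hcb]
        exact Submodule.smul_mem _ _ (Submodule.subset_span (hcsupp hb'))
    -- submodules at level i
    have hmapM : Submodule.map g.toLinearMap
        (Submodule.span (A' i) (Subtype.val ⁻¹' (↑T : Set B) : Set (B' i)))
        = Submodule.span (A' i) (↑T : Set B) := by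
      rw [Submodule.map_span]
      congr 1
      show Subtype.val '' (Subtype.val ⁻¹' (↑T : Set B)) = (↑T : Set B)
      rw [Set.image_preimage_eq_inter_range, Subtype.range_coe]
      exact Set.inter_eq_left.mpr (fun x hx => hTB x (by
        rw [Finset.coe_union]; exact Set.mem_union_left _ hx))
    have hmapN : Submodule.map g.toLinearMap
        (Submodule.span (A' i) (Subtype.val ⁻¹' (↑T' : Set B) : Set (B' i)))
        = Submodule.span (A' i) (↑T' : Set B) := by
      rw [Submodule.map_span]
      congr 1
      show Subtype.val '' (Subtype.val ⁻¹' (↑T' : Set B)) = (↑T' : Set B)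
      rw [Set.image_preimage_eq_inter_range, Subtype.range_coe]
      exact Set.inter_eq_left.mpr (fun x hx => hTB x (by
        rw [Finset.coe_union]; exact Set.mem_union_right _ hx))
    have hMN : Submodule.span (A' i) (Subtype.val ⁻¹' (↑T : Set B) : Set (B' i)) *
        Submodule.span (A' i) (Subtype.val ⁻¹' (↑T' : Set B) : Set (B' i)) = 1 := by
      apply Submodule.map_injective_of_injective
        (f := g.toLinearMap) Subtype.val_injective
      rw [Submodule.map_mul _ _ g, Submodule.map_one g, hmapM, hmapN]
      exact hPQ
    refine ⟨i, ⟨_, _, hMN, by rw [mul_comm]; exact hMN⟩, ?_⟩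
    show (L : Submodule A B) = Submodule.span A (Subtype.val ''
      ((Submodule.span (A' i) (Subtype.val ⁻¹' (↑T : Set B) : Set (B' i)) : Submodule (A' i) (B' i)) : Set (B' i)))
    have himg : Subtype.val ''
        ((Submodule.span (A' i) (Subtype.val ⁻¹' (↑T : Set B) : Set (B' i)) : Submodule (A' i) (B' i)) : Set (B' i))
        = ((Submodule.span (A' i) (↑T : Set B) : Submodule (A' i) B) : Set B) := by
      rw [← hmapM]
      exact (Submodule.map_coe g.toLinearMap _).symm
    rw [himg, aux_spanSpan (hAle i)]
    exact hT
  · -- part (ii)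
    intro i M N heq
    letI : Algebra (A' i) (B' i) := (Subring.inclusion (hAB i)).toAlgebra
    let g : (B' i) →ₐ[A' i] B :=
      { toFun := Subtype.val, map_one' := rfl, map_mul' := fun _ _ => rfl,
        map_zero' := rfl, map_add' := fun _ _ => rfl, commutes' := fun _ => rfl }
    obtain ⟨TM, _, hTM, -, -⟩ := aux_fg M
    obtain ⟨TN, _, hTN, -, -⟩ := aux_fg N
    have key : ∀ (P : Submodule (A' i) (B' i)) (s : Set (B' i)), P = Submodule.span (A' i) s →
        Subtype.val '' (P : Set (B' i)) =
          ((Submodule.span (A' i) (Subtype.val '' s) : Submodule (A' i) B) : Set B) := by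
      intro P s hP
      rw [hP]
      have hmc := Submodule.map_coe g.toLinearMap (Submodule.span (A' i) s)
      rw [Submodule.map_span] at hmc
      exact hmc.symm
    rw [key _ _ hTM, key _ _ hTN, aux_spanSpan (hAle i), aux_spanSpan (hAle i)] at heq
    -- finsets in B
    obtain ⟨sM, hsM⟩ : ∃ s : Finset B, s = TM.image Subtype.val := ⟨_, rfl⟩
    obtain ⟨sN, hsN⟩ : ∃ s : Finset B, s = TN.image Subtype.val := ⟨_, rfl⟩
    have hcoeM : (↑sM : Set B) = Subtype.val '' (↑TM : Set (B' i)) := by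
      rw [hsM]; exact Finset.coe_image
    have hcoeN : (↑sN : Set B) = Subtype.val '' (↑TN : Set (B' i)) := by
      rw [hsN]; exact Finset.coe_image
    rw [← hcoeM, ← hcoeN] at heq
    -- coefficients
    have hc1 : ∀ t : B, ∃ c : B →₀ A, t ∈ sM →
        (↑c.support ⊆ (↑sN : Set B) ∧ (c.sum fun mi r => r • mi) = t) := by
      intro t
      by_cases ht : t ∈ sM
      · have : t ∈ Submodule.span A (↑sN : Set B) := by
          rw [← heq]; exact Submodule.subset_span (Finset.mem_coe.mpr ht)
        obtain ⟨cc, h1, h2⟩ := Submodule.mem_span_set.mp this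
        exact ⟨cc, fun _ => ⟨h1, h2⟩⟩
      · exact ⟨0, fun h => absurd h ht⟩
    choose c1 hc1' using hc1
    have hc2 : ∀ t : B, ∃ c : B →₀ A, t ∈ sN →
        (↑c.support ⊆ (↑sM : Set B) ∧ (c.sum fun mi r => r • mi) = t) := by
      intro t
      by_cases ht : t ∈ sN
      · have : t ∈ Submodule.span A (↑sM : Set B) := by
          rw [heq]; exact Submodule.subset_span (Finset.mem_coe.mpr ht)
        obtain ⟨cc, h1, h2⟩ := Submodule.mem_span_set.mp this
        exact ⟨cc, fun _ => ⟨h1, h2⟩⟩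
      · exact ⟨0, fun h => absurd h ht⟩
    choose c2 hc2' using hc2
    obtain ⟨j, hj⟩ := Finset.exists_le
      (({i} : Finset ι) ∪ sM.biUnion (fun t => (c1 t).support.image (fun b => fA ((c1 t b : B))))
        ∪ sN.biUnion (fun t => (c2 t).support.image (fun b => fA ((c2 t b : B)))))
    have hij : i ≤ j := hj i (Finset.mem_union_left _ (Finset.mem_union_left _ (Finset.mem_singleton_self i)))
    have hcoef1 : ∀ t ∈ sM, ∀ b ∈ (c1 t).support, (c1 t b : B) ∈ A' j := by
      intro t ht b hb
      refine hmonoA (hj _ ?_) (hfA _ (c1 t b).2)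
      exact Finset.mem_union_left _ (Finset.mem_union_right _
        (Finset.mem_biUnion.mpr ⟨t, ht, Finset.mem_image_of_mem _ hb⟩))
    have hcoef2 : ∀ t ∈ sN, ∀ b ∈ (c2 t).support, (c2 t b : B) ∈ A' j := by
      intro t ht b hb
      refine hmonoA (hj _ ?_) (hfA _ (c2 t b).2)
      exact Finset.mem_union_right _
        (Finset.mem_biUnion.mpr ⟨t, ht, Finset.mem_image_of_mem _ hb⟩)
    -- equality of spans over A' j in B
    have heqj : Submodule.span (A' j) (↑sM : Set B) = Submodule.span (A' j) (↑sN : Set B) := by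
      refine le_antisymm ?_ ?_
      · rw [Submodule.span_le]
        intro t ht
        rw [Finset.mem_coe] at ht
        obtain ⟨h1, h2⟩ := hc1' t ht
        rw [SetLike.mem_coe, ← h2]
        refine Submodule.finsuppSum_mem _ _ _ _ fun b hb => ?_
        have hb' : b ∈ (c1 t).support := Finsupp.mem_support_iff.mpr hb
        have hcb : (c1 t b) • b = (⟨((c1 t b : B)), hcoef1 t ht b hb'⟩ : A' j) • b := rfl
        rw [hcb]
        exact Submodule.smul_mem _ _ (Submodule.subset_span (h1 hb'))
      · rw [Submodule.span_le]
        intro t ht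
        rw [Finset.mem_coe] at ht
        obtain ⟨h1, h2⟩ := hc2' t ht
        rw [SetLike.mem_coe, ← h2]
        refine Submodule.finsuppSum_mem _ _ _ _ fun b hb => ?_
        have hb' : b ∈ (c2 t).support := Finsupp.mem_support_iff.mpr hb
        have hcb : (c2 t b) • b = (⟨((c2 t b : B)), hcoef2 t ht b hb'⟩ : A' j) • b := rfl
        rw [hcb]
        exact Submodule.smul_mem _ _ (Submodule.subset_span (h1 hb'))
    -- transfer to level j
    letI : Algebra (A' j) (B' j) := (Subring.inclusion (hAB j)).toAlgebra
    let gj : (B' j) →ₐ[A' j] B :=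
      { toFun := Subtype.val, map_one' := rfl, map_mul' := fun _ _ => rfl,
        map_zero' := rfl, map_add' := fun _ _ => rfl, commutes' := fun _ => rfl }
    refine ⟨j, hij, ?_⟩
    apply Submodule.map_injective_of_injective (f := gj.toLinearMap) Subtype.val_injective
    rw [Submodule.map_span, Submodule.map_span]
    have himg : ∀ (s : Set (B' i)),
        (⇑gj.toLinearMap) '' (Subring.inclusion (hmonoB hij) '' s) = Subtype.val '' s := by
      intro s
      rw [Set.image_image]
      rfl
    rw [himg, himg]
    have keyj : ∀ (P : Submodule (A' i) (B' i)) (s : Set (B' i)), P = Submodule.span (A' i) s →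
        Subtype.val '' (P : Set (B' i)) =
          ((Submodule.span (A' i) (Subtype.val '' s) : Submodule (A' i) B) : Set B) := key
    rw [keyj _ _ hTM, keyj _ _ hTN, aux_spanSpan (hmonoA hij), aux_spanSpan (hmonoA hij),
      ← hcoeM, ← hcoeN]
    exact heqj
end

section
/- For any commutative ring A, the sequence 1 → U(A) → U(A[t]) × U(A[t⁻¹]) → U(A[t,t⁻¹]) is exact, where the first map is the diagonal and the second map sends (f,g) to f·g⁻¹ (viewing both in the Laurent polynomial ring). That is, a unit of A[t,t⁻¹] that can be written as f·g⁻¹ with f ∈ U(A[t]) and g ∈ U(A[t⁻¹]) equal to the same unit determines f and g up to a common unit of A. -/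
open Polynomial LaurentPolynomial

/-- The embedding of `A[t⁻¹]` (polynomials in `t⁻¹`) into the Laurent polynomial ring
`A[t,t⁻¹]`: first view a polynomial in `A[t]`, then substitute `t ↦ t⁻¹`. -/
noncomputable def toLaurentInv (A : Type) [CommRing A] :
    Polynomial A →+* LaurentPolynomial A :=
  (LaurentPolynomial.invert.toAlgHom.toRingHom).comp Polynomial.toLaurent

lemma key {A : Type} [CommRing A] (f g : Polynomial A)
    (h : (Polynomial.toLaurent f : LaurentPolynomial A) = invert (Polynomial.toLaurent g)) :
    ∃ a : A, f = Polynomial.C a ∧ g = Polynomial.C a := by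
  have hfsupp : f.support ⊆ {0} := by
    intro n hn
    have h1 : (n : ℤ) ∈ (Polynomial.toLaurent f).coeff.support := by
      rw [toLaurent_support]
      exact Finset.mem_map_of_mem _ hn
    rw [h] at h1
    have h2 : (Polynomial.toLaurent g).coeff (-(n : ℤ)) ≠ 0 := by
      have := Finsupp.mem_support_iff.mp h1
      rwa [invert_apply] at this
    have h3 : (-(n : ℤ)) ∈ (Polynomial.toLaurent g).coeff.support := Finsupp.mem_support_iff.mpr h2
    rw [toLaurent_support] at h3
    obtain ⟨m, _, hm⟩ := Finset.mem_map.mp h3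
    simp only [Nat.castEmbedding_apply] at hm
    have : n = 0 := by omega
    simp [this]
  have hf : f = Polynomial.C (f.coeff 0) :=
    Polynomial.eq_C_of_natDegree_eq_zero (Nat.le_zero.mp <|
      Polynomial.natDegree_le_iff_coeff_eq_zero.mpr fun m hm => by
        by_contra hc
        have := hfsupp (Polynomial.mem_support_iff.mpr hc)
        simp at this
        omega)
  have hgsupp : g.support ⊆ {0} := by
    intro n hn
    have h1 : (n : ℤ) ∈ (Polynomial.toLaurent g).coeff.support := by
      rw [toLaurent_support]
      exact Finset.mem_map_of_mem _ hn
    have h2 : (Polynomial.toLaurent f).coeff (-(n : ℤ)) ≠ 0 := by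
      rw [h, invert_apply, neg_neg]
      exact Finsupp.mem_support_iff.mp h1
    have h3 : (-(n : ℤ)) ∈ (Polynomial.toLaurent f).coeff.support := Finsupp.mem_support_iff.mpr h2
    rw [toLaurent_support] at h3
    obtain ⟨m, _, hm⟩ := Finset.mem_map.mp h3
    simp only [Nat.castEmbedding_apply] at hm
    have : n = 0 := by omega
    simp [this]
  have hg : g = Polynomial.C (g.coeff 0) :=
    Polynomial.eq_C_of_natDegree_eq_zero (Nat.le_zero.mp <|
      Polynomial.natDegree_le_iff_coeff_eq_zero.mpr fun m hm => by
        by_contra hc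
        have := hgsupp (Polynomial.mem_support_iff.mpr hc)
        simp at this
        omega)
  refine ⟨f.coeff 0, hf, ?_⟩
  rw [hg]
  have : (LaurentPolynomial.C (f.coeff 0) : LaurentPolynomial A) = LaurentPolynomial.C (g.coeff 0) := by
    have := h
    rw [hf, hg, Polynomial.toLaurent_C, Polynomial.toLaurent_C, invert_C] at this
    exact this
  have hab : f.coeff 0 = g.coeff 0 := by
    have := congrArg (fun p => p.coeff (0 : ℤ)) this
    simpa [LaurentPolynomial.C_apply] using this
  rw [hab]

/-- for any commutative ring `A`, the sequence
`1 → U(A) → U(A[t]) × U(A[t⁻¹]) → U(A[t,t⁻¹])` is exact: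
(i) the diagonal map `U(A) → U(A[t]) × U(A[t⁻¹])` is injective, and
(ii) a pair `(f,g)` with `f ∈ U(A[t])`, `g ∈ U(A[t⁻¹])` becomes equal in
`U(A[t,t⁻¹])` (i.e. `f·g⁻¹ = 1`) iff `f` and `g` are a common unit of `A`. -/
theorem stmt_8 (A : Type) [CommRing A] :
    (Function.Injective fun a : Aˣ =>
      ((Units.map (Polynomial.C (R := A)).toMonoidHom a,
        Units.map (Polynomial.C (R := A)).toMonoidHom a) :
          (Polynomial A)ˣ × (Polynomial A)ˣ)) ∧
    (∀ f g : (Polynomial A)ˣ,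
      Units.map (Polynomial.toLaurent (R := A)).toMonoidHom f *
          (Units.map (toLaurentInv A).toMonoidHom g)⁻¹ = 1 ↔
        ∃ a : Aˣ, f = Units.map (Polynomial.C (R := A)).toMonoidHom a ∧
          g = Units.map (Polynomial.C (R := A)).toMonoidHom a) := by
  constructor
  · intro a b hab
    have h1 := congrArg (fun p => ((p.1 : (Polynomial A)ˣ) : Polynomial A)) hab
    simp only [Units.coe_map, MonoidHom.coe_coe] at h1
    exact Units.ext (Polynomial.C_injective h1)
  · intro f g
    constructor
    · intro h
      have h1 : Units.map (Polynomial.toLaurent (R := A)).toMonoidHom f =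
          Units.map (toLaurentInv A).toMonoidHom g := mul_inv_eq_one.mp h
      have h2 : (Polynomial.toLaurent (f : Polynomial A) : LaurentPolynomial A) =
          invert (Polynomial.toLaurent (g : Polynomial A)) := by
        have := congrArg (Units.val (α := LaurentPolynomial A)) h1
        simpa [toLaurentInv] using this
      obtain ⟨a, hf, hg⟩ := key _ _ h2
      have ha : IsUnit a := by
        have : IsUnit (Polynomial.C a) := hf ▸ f.isUnit
        exact Polynomial.isUnit_C.mp this
      obtain ⟨au, rfl⟩ := ha
      exact ⟨au, Units.ext (by simpa using hf), Units.ext (by simpa using hg)⟩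
    · rintro ⟨a, rfl, rfl⟩
      rw [mul_inv_eq_one]
      ext
      simp [toLaurentInv, Polynomial.toLaurent_C]
end

section
/- The composition of anodal ring extensions is anodal: if A ⊆ B is anodal and B ⊆ C is anodal, then A ⊆ C is anodal. -/
/-- the composition of anodal extensions is anodal. Here an extension
`A ⊆ B` is anodal if every `b ∈ B` with `b² − b ∈ A` and `b³ − b² ∈ A` lies in `A`. -/
theorem stmt_13 {C : Type} [CommRing C] (A B : Subring C) (hAB : A ≤ B)
    (hB : ∀ b ∈ B, b ^ 2 - b ∈ A → b ^ 3 - b ^ 2 ∈ A → b ∈ A)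
    (hC : ∀ c : C, c ^ 2 - c ∈ B → c ^ 3 - c ^ 2 ∈ B → c ∈ B) :
    ∀ c : C, c ^ 2 - c ∈ A → c ^ 3 - c ^ 2 ∈ A → c ∈ A := by
  intro c h1 h2
  exact hB c (hC c (hAB h1) (hAB h2)) h1 h2
end

section
/- Let A ⊆ B be an extension of commutative rings with N𝓘(A,B) = 0 (where N𝓘(A,B) is the kernel of the map 𝓘(A[t],B[t]) → 𝓘(A,B) induced by t ↦ 1). Then A is seminormal in B: for every b ∈ B with b², b³ ∈ A, one has b ∈ A. -/
open Polynomial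
open Pointwise

/-- let `A ⊆ B` be a commutative ring extension with `N𝓘(A,B) = 0`,
i.e. the homomorphism `𝓘(A[t],B[t]) → 𝓘(A,B)` induced by `t ↦ 1` has trivial kernel.
Then `A` is seminormal in `B`: every `b ∈ B` with `b² ∈ A` and `b³ ∈ A` lies in `A`. -/
theorem stmt_15 {B : Type} [CommRing B] (A : Subring B) :
    (letI : Algebra (Polynomial A) (Polynomial B) :=
      (Polynomial.mapRingHom A.subtype).toAlgebra
    ∀ M : (Submodule (Polynomial A) (Polynomial B))ˣ,
      Submodule.span A
          ((fun p : Polynomial B => p.eval 1) ''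
            ((M : Submodule (Polynomial A) (Polynomial B)) : Set (Polynomial B))) =
        (1 : Submodule A B) →
      (M : Submodule (Polynomial A) (Polynomial B)) = 1) →
    ∀ b : B, b ^ 2 ∈ A → b ^ 3 ∈ A → b ∈ A := by
  letI : Algebra (Polynomial A) (Polynomial B) :=
    (Polynomial.mapRingHom A.subtype).toAlgebra
  intro H b hb2 hb3
  have halg : algebraMap (Polynomial A) (Polynomial B) = Polynomial.mapRingHom A.subtype := rfl
  set u : Polynomial B := X - 1 with hu
  set f : Polynomial B := 1 - C b * u with hf
  set f' : Polynomial B := 1 + C b * u with hf'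
  set g : Polynomial B := C b ^ 2 * u ^ 2 with hg
  set h : Polynomial B := C b ^ 3 * u ^ 3 with hh
  set s : Set (Polynomial B) := {f, g, h} with hs
  set n : Set (Polynomial B) := {f', g, h} with hn
  have hfs : f ∈ s := Set.mem_insert _ _
  have hgs : g ∈ s := Set.mem_insert_of_mem _ (Set.mem_insert _ _)
  have hhs : h ∈ s := Set.mem_insert_of_mem _ (Set.mem_insert_of_mem _ rfl)
  have hfn : f' ∈ n := Set.mem_insert _ _
  have hgn : g ∈ n := Set.mem_insert_of_mem _ (Set.mem_insert _ _)
  have hhn : h ∈ n := Set.mem_insert_of_mem _ (Set.mem_insert_of_mem _ rfl)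
  set v : Polynomial A := X - 1 with hv
  have hmapv : Polynomial.map A.subtype v = u := by
    simp [hv, hu, Polynomial.map_sub]
  have key : ∀ (x : B) (k : ℕ), x ∈ A →
      C x * u ^ k ∈ (1 : Submodule (Polynomial A) (Polynomial B)) := by
    intro x k hx
    rw [Submodule.mem_one]
    refine ⟨C ⟨x, hx⟩ * v ^ k, ?_⟩
    rw [halg]
    simp [Polynomial.map_mul, Polynomial.map_pow, hmapv]
  have hone : (1 : Polynomial B) ∈ (1 : Submodule (Polynomial A) (Polynomial B)) := by
    rw [Submodule.mem_one]; exact ⟨1, map_one _⟩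
  have hb4 : b ^ 4 ∈ A := by
    have := mul_mem hb2 hb2; rwa [show b^2*b^2 = b^4 by ring] at this
  have hb5 : b ^ 5 ∈ A := by
    have := mul_mem hb2 hb3; rwa [show b^2*b^3 = b^5 by ring] at this
  have hb6 : b ^ 6 ∈ A := by
    have := mul_mem hb3 hb3; rwa [show b^3*b^3 = b^6 by ring] at this
  have hb2' : (C b ^ 2 * u ^ 2 : Polynomial B) ∈ (1 : Submodule (Polynomial A) (Polynomial B)) := by
    have := key (b^2) 2 hb2; rwa [map_pow] at this
  have hb3' : (C b ^ 3 * u ^ 3 : Polynomial B) ∈ (1 : Submodule (Polynomial A) (Polynomial B)) := by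
    have := key (b^3) 3 hb3; rwa [map_pow] at this
  have hb4' : (C b ^ 4 * u ^ 4 : Polynomial B) ∈ (1 : Submodule (Polynomial A) (Polynomial B)) := by
    have := key (b^4) 4 hb4; rwa [map_pow] at this
  have hb5' : (C b ^ 5 * u ^ 5 : Polynomial B) ∈ (1 : Submodule (Polynomial A) (Polynomial B)) := by
    have := key (b^5) 5 hb5; rwa [map_pow] at this
  have hb6' : (C b ^ 6 * u ^ 6 : Polynomial B) ∈ (1 : Submodule (Polynomial A) (Polynomial B)) := by
    have := key (b^6) 6 hb6; rwa [map_pow] at this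
  -- M * N = 1
  have hMN : Submodule.span (Polynomial A) s * Submodule.span (Polynomial A) n = 1 := by
    rw [Submodule.span_mul_span]
    apply le_antisymm
    · rw [Submodule.span_le]
      rintro x ⟨y, hy, z, hz, rfl⟩
      rcases hy with rfl | rfl | rfl <;> rcases hz with rfl | rfl | rfl
      · show f * f' ∈ (1 : Submodule (Polynomial A) (Polynomial B))
        rw [show f * f' = 1 - C b ^2 * u^2 by rw [hf, hf']; ring]
        exact sub_mem hone hb2'
      · show f * g ∈ (1 : Submodule (Polynomial A) (Polynomial B))
        rw [show f * g = C b^2*u^2 - C b^3*u^3 by rw [hf, hg]; ring]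
        exact sub_mem hb2' hb3'
      · show f * h ∈ (1 : Submodule (Polynomial A) (Polynomial B))
        rw [show f * h = C b^3*u^3 - C b^4*u^4 by rw [hf, hh]; ring]
        exact sub_mem hb3' hb4'
      · show g * f' ∈ (1 : Submodule (Polynomial A) (Polynomial B))
        rw [show g * f' = C b^2*u^2 + C b^3*u^3 by rw [hf', hg]; ring]
        exact add_mem hb2' hb3'
      · show g * g ∈ (1 : Submodule (Polynomial A) (Polynomial B))
        rw [show g * g = C b^4*u^4 by rw [hg]; ring]
        exact hb4'
      · show g * h ∈ (1 : Submodule (Polynomial A) (Polynomial B))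
        rw [show g * h = C b^5*u^5 by rw [hg, hh]; ring]
        exact hb5'
      · show h * f' ∈ (1 : Submodule (Polynomial A) (Polynomial B))
        rw [show h * f' = C b^3*u^3 + C b^4*u^4 by rw [hf', hh]; ring]
        exact add_mem hb3' hb4'
      · show h * g ∈ (1 : Submodule (Polynomial A) (Polynomial B))
        rw [show h * g = C b^5*u^5 by rw [hg, hh]; ring]
        exact hb5'
      · show h * h ∈ (1 : Submodule (Polynomial A) (Polynomial B))
        rw [show h * h = C b^6*u^6 by rw [hh]; ring]
        exact hb6'
    · rw [Submodule.one_le]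
      have h1 : f * f' ∈ s * n := Set.mul_mem_mul hfs hfn
      have h2 : g * f' ∈ s * n := Set.mul_mem_mul hgs hfn
      have h3 : f * h ∈ s * n := Set.mul_mem_mul hfs hhn
      have h4 : g * g ∈ s * n := Set.mul_mem_mul hgs hgn
      have e : (1 : Polynomial B) = f * f' + g * f' - f * h - g * g := by
        rw [hf, hf', hg, hh]; ring
      rw [e]
      exact sub_mem (sub_mem (add_mem (Submodule.subset_span h1) (Submodule.subset_span h2))
        (Submodule.subset_span h3)) (Submodule.subset_span h4)
  set M : (Submodule (Polynomial A) (Polynomial B))ˣ :=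
    ⟨Submodule.span (Polynomial A) s, Submodule.span (Polynomial A) n, hMN,
      by rw [mul_comm]; exact hMN⟩ with hM
  have heval : Submodule.span A
      ((fun p : Polynomial B => p.eval 1) ''
        ((M : Submodule (Polynomial A) (Polynomial B)) : Set (Polynomial B))) =
      (1 : Submodule A B) := by
    apply le_antisymm
    · rw [Submodule.span_le]
      rintro x ⟨p, hp, rfl⟩
      have hPA : ∀ (q : Polynomial B), q ∈ Submodule.span (Polynomial A) s → q.eval 1 ∈ A := by
        intro q hq
        induction hq using Submodule.span_induction with
        | mem x hx =>
          rcases hx with rfl | rfl | rfl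
          · simp only [hf, hu]
            simp only [eval_sub, eval_one, eval_mul, eval_C, eval_X, sub_self, mul_zero, sub_zero]
            exact one_mem A
          · simp only [hg, hu]
            simp only [eval_mul, eval_pow, eval_sub, eval_one, eval_C, eval_X, sub_self]
            simp only [zero_pow, mul_zero, ne_eq, OfNat.ofNat_ne_zero, not_false_eq_true]
            exact zero_mem A
          · simp only [hh, hu]
            simp only [eval_mul, eval_pow, eval_sub, eval_one, eval_C, eval_X, sub_self]
            simp only [zero_pow, mul_zero, ne_eq, OfNat.ofNat_ne_zero, not_false_eq_true]
            exact zero_mem A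
        | zero =>
            simp only [eval_zero]
            exact zero_mem A
        | add x y _ _ hx hy => simpa using add_mem hx hy
        | smul r x _ hx =>
          have hrw : r • x = Polynomial.map A.subtype r * x := by
            rw [Algebra.smul_def, halg]; rfl
          rw [hrw, eval_mul, eval_one_map]
          exact mul_mem (SetLike.coe_mem _) hx
      have hA : (p.eval 1 : B) ∈ A := hPA p hp
      rw [SetLike.mem_coe, Submodule.mem_one]
      exact ⟨⟨p.eval 1, hA⟩, rfl⟩
    · rw [Submodule.one_le]
      have hmem1 : (fun p : Polynomial B => p.eval 1) f ∈
          (fun p : Polynomial B => p.eval 1) ''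
            ((M : Submodule (Polynomial A) (Polynomial B)) : Set (Polynomial B)) :=
        ⟨f, Submodule.subset_span hfs, rfl⟩
      have := Submodule.subset_span (R := A) hmem1
      simpa [hf, hu] using this
  have hM1 : (M : Submodule (Polynomial A) (Polynomial B)) = 1 := H M heval
  have hfmem : f ∈ (1 : Submodule (Polynomial A) (Polynomial B)) := by
    rw [← hM1]; exact Submodule.subset_span hfs
  rw [Submodule.mem_one] at hfmem
  obtain ⟨p, hp⟩ := hfmem
  have hc : ((p.coeff 1 : A) : B) = f.coeff 1 := by
    rw [← hp, halg]
    simp [Polynomial.coeff_map]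
  have hfc : f.coeff 1 = -b := by
    rw [hf, hu]
    simp [mul_sub, coeff_sub, coeff_one]
  rw [hfc] at hc
  have hnb : -b ∈ A := hc ▸ SetLike.coe_mem _
  simpa using neg_mem hnb
end

section
/- Let A ⊆ B be an extension of commutative rings and set Unil(A⊆B) = Unil(B)/Unil(A), where Unil(R) = 1 + nil(R). Then the natural map Unil(B[t])/Unil(A[t]) → Unil(B)/Unil(A) induced by t ↦ 1 has trivial kernel if and only if nil(A) = nil(B) (equivalently, nil(B) ⊆ A). -/
open Polynomial

/-- for a commutative ring extension `A ⊆ B`, the natural map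
`Unil(B[t])/Unil(A[t]) → Unil(B)/Unil(A)` induced by `t ↦ 1` has trivial kernel if and
only if `nil(A) = nil(B)`, i.e. `nil(B) ⊆ A`.  Here `Unil(R) = 1 + nil(R)` and an
element of `Unil(B[t])` is a polynomial `p` with `p − 1` nilpotent coefficientwise;
its class is trivial in the target iff `p.eval 1 ∈ 1 + nil(A)`, and it is trivial in
the source iff all coefficients of `p − 1` lie in `A` (hence in `nil(A)`). -/
theorem stmt_17 {B : Type} [CommRing B] (A : Subring B) :
    (∀ p : Polynomial B, (∀ n, (p - 1).coeff n ∈ nilradical B) →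
        p.eval 1 - 1 ∈ A → ∀ n, (p - 1).coeff n ∈ A) ↔
      (∀ b ∈ nilradical B, b ∈ A) := by
  constructor
  · intro h b hb
    have := h (1 + C b * X - C b * X ^ 2) ?_ ?_ 1
    · simpa using this
    · intro n
      have : (1 + C b * X - C b * X ^ 2 - 1 : Polynomial B) = C b * X - C b * X ^ 2 := by ring
      rw [this]
      simp only [coeff_sub, coeff_C_mul, coeff_X, coeff_X_pow]
      rcases n with _ | _ | _ | n <;> simp [hb, Submodule.neg_mem _ hb]
    · simpa using A.zero_mem
  · intro h p hp _ n
    exact h _ (hp n)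
end

section
/- Let A ⊆ B ⊆ C be extensions of commutative rings, and suppose L is an invertible A-submodule of C contained in B. Then the inverse A-submodule L⁻¹ (the A-submodule M of C with L·M = A) need not be contained in B in general; however, if additionally L·(B ∩ L⁻¹) = A, then L is an invertible A-submodule of B. In particular, the image of 𝓘(A,B) → 𝓘(A,C) consists exactly of those invertible A-submodules L of C with both L ⊆ B and L⁻¹ ⊆ B. -/
/-- let `A ⊆ B ⊆ C` be extensions of commutative rings and `L` an
invertible `A`-submodule of `C` contained in `B`.
(i) The inverse `L⁻¹` need not be contained in `B` in general;
(ii) however, if additionally `L·(B ∩ L⁻¹) = A`, then `L` is an invertible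
`A`-submodule of `B`;
(iii) in particular, the image of `𝓘(A,B) → 𝓘(A,C)` consists exactly of those
invertible `A`-submodules `L` of `C` with `L ⊆ B` and `L⁻¹ ⊆ B`. -/
theorem stmt_19 {C : Type} [CommRing C] (A B : Subring C) (hAB : A ≤ B) :
    letI : Algebra A B := (Subring.inclusion hAB).toAlgebra
    (¬ ∀ (C₀ : Type) [CommRing C₀] (A₀ B₀ : Subring C₀), A₀ ≤ B₀ →
        ∀ L : (Submodule A₀ C₀)ˣ,
          ((L : Submodule A₀ C₀) : Set C₀) ⊆ (B₀ : Set C₀) →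
          (((L⁻¹ : (Submodule A₀ C₀)ˣ) : Submodule A₀ C₀) : Set C₀) ⊆ (B₀ : Set C₀)) ∧
    (∀ L : (Submodule A C)ˣ,
        ((L : Submodule A C) : Set C) ⊆ (B : Set C) →
        (L : Submodule A C) *
            (Submodule.span A (B : Set C) ⊓
              ((L⁻¹ : (Submodule A C)ˣ) : Submodule A C)) = 1 →
        ∃ M : (Submodule A B)ˣ,
          ((L : Submodule A C) : Set C) =
            Subtype.val '' ((M : Submodule A B) : Set B)) ∧
    (∀ L : (Submodule A C)ˣ,
        (∃ M : (Submodule A B)ˣ,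
            ((L : Submodule A C) : Set C) =
              Subtype.val '' ((M : Submodule A B) : Set B)) ↔
          (((L : Submodule A C) : Set C) ⊆ (B : Set C) ∧
            (((L⁻¹ : (Submodule A C)ˣ) : Submodule A C) : Set C) ⊆ (B : Set C))) := by
  letI : Algebra A B := (Subring.inclusion hAB).toAlgebra
  -- the A-algebra inclusion B →ₐ[A] C
  let f : B →ₐ[A] C := { toRingHom := B.subtype, commutes' := fun a => rfl }
  have finj : Function.Injective f.toLinearMap := Subtype.val_injective
  have hmc : ∀ {S : Submodule A C}, ((S : Set C) ⊆ (B : Set C)) →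
      Submodule.map f.toLinearMap (Submodule.comap f.toLinearMap S) = S := by
    intro S hS
    rw [Submodule.map_comap_eq, inf_eq_right]
    intro x hx
    exact ⟨⟨x, hS hx⟩, rfl⟩
  have hsub : ∀ (S : Submodule A B),
      ((Submodule.map f.toLinearMap S : Submodule A C) : Set C) ⊆ (B : Set C) := by
    rintro S x ⟨y, _, rfl⟩
    exact y.2
  -- core lemma: both containments give a preimage unit
  have core : ∀ L : (Submodule A C)ˣ,
      ((L : Submodule A C) : Set C) ⊆ (B : Set C) →
      (((L⁻¹ : (Submodule A C)ˣ) : Submodule A C) : Set C) ⊆ (B : Set C) →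
      ∃ M : (Submodule A B)ˣ,
        ((L : Submodule A C) : Set C) = Subtype.val '' ((M : Submodule A B) : Set B) := by
    intro L hL hLi
    have hmul : Submodule.comap f.toLinearMap (L : Submodule A C) *
        Submodule.comap f.toLinearMap ((L⁻¹ : (Submodule A C)ˣ) : Submodule A C) = 1 := by
      apply Submodule.map_injective_of_injective finj
      rw [Submodule.map_mul _ _ f, hmc hL, hmc hLi, Submodule.map_one f, Units.mul_inv]
    refine ⟨⟨_, _, hmul, by rwa [mul_comm] at hmul⟩, ?_⟩
    conv_lhs => rw [← hmc hL]
    rfl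
  -- span A B has carrier B
  have hspan_sub : ((Submodule.span A (B : Set C) : Submodule A C) : Set C) ⊆ (B : Set C) := by
    intro x hx
    refine Submodule.span_induction (fun x hx => hx) B.zero_mem
      (fun x y _ _ hx hy => B.add_mem hx hy) (fun a x _ hx => ?_) hx
    exact B.mul_mem (hAB a.2) hx
  refine ⟨?_, ?_, ?_⟩
  · -- counterexample
    intro h
    have key : Submodule.span (⊥ : Subring ℚ) {(2 : ℚ)} *
        Submodule.span (⊥ : Subring ℚ) {(2⁻¹ : ℚ)} = 1 := by
      rw [Submodule.span_mul_span, Set.singleton_mul_singleton]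
      norm_num
      exact Submodule.one_eq_span.symm
    set L : (Submodule (⊥ : Subring ℚ) ℚ)ˣ :=
      ⟨_, _, key, by rwa [mul_comm] at key⟩ with hLdef
    have hLB : ((L : Submodule (⊥ : Subring ℚ) ℚ) : Set ℚ) ⊆ ((⊥ : Subring ℚ) : Set ℚ) := by
      intro x hx
      have h2 : (2 : ℚ) ∈ (⊥ : Subring ℚ) := by
        rw [Subring.mem_bot]; exact ⟨2, by norm_num⟩
      have : x ∈ Submodule.span (⊥ : Subring ℚ) (((⊥ : Subring ℚ) : Set ℚ)) :=
        Submodule.span_mono (Set.singleton_subset_iff.2 h2) hx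
      refine Submodule.span_induction (fun x hx => hx) (Subring.zero_mem _)
        (fun x y _ _ hx hy => Subring.add_mem _ hx hy)
        (fun a x _ hx => Subring.mul_mem _ a.2 hx) this
    have := h ℚ ⊥ ⊥ le_rfl L hLB
    have hmem : (2⁻¹ : ℚ) ∈ ((⊥ : Subring ℚ) : Set ℚ) :=
      this (Submodule.mem_span_singleton_self _)
    rw [SetLike.mem_coe, Subring.mem_bot] at hmem
    obtain ⟨n, hn⟩ := hmem
    have h1 : ((n * 2 : ℤ) : ℚ) = ((1 : ℤ) : ℚ) := by push_cast [hn]; norm_num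
    have := Int.cast_injective (α := ℚ) h1
    omega
  · -- part (ii)
    intro L hL hmul
    apply core L hL
    have hinv : ((L⁻¹ : (Submodule A C)ˣ) : Submodule A C) =
        Submodule.span A (B : Set C) ⊓ ((L⁻¹ : (Submodule A C)ˣ) : Submodule A C) := by
      calc ((L⁻¹ : (Submodule A C)ˣ) : Submodule A C)
          = ((L⁻¹ : (Submodule A C)ˣ) : Submodule A C) * ((L : Submodule A C) *
              (Submodule.span A (B : Set C) ⊓ ((L⁻¹ : (Submodule A C)ˣ) : Submodule A C))) := by
            rw [hmul, mul_one]
        _ = (((L⁻¹ : (Submodule A C)ˣ) : Submodule A C) * (L : Submodule A C)) *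
              (Submodule.span A (B : Set C) ⊓ ((L⁻¹ : (Submodule A C)ˣ) : Submodule A C)) := by
            rw [mul_assoc]
        _ = _ := by rw [Units.inv_mul, one_mul]
    intro x hx
    rw [hinv] at hx
    exact hspan_sub hx.1
  · -- part (iii)
    intro L
    constructor
    · rintro ⟨M, hM⟩
      have hLval : (L : Submodule A C) = Submodule.map f.toLinearMap (M : Submodule A B) := by
        apply SetLike.coe_injective
        rw [hM]; rfl
      set U : (Submodule A C)ˣ := Units.map (Submodule.mapHom f).toMonoidHom M with hU
      have hLU : L = U := Units.ext hLval
      constructor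
      · rw [hLval]; exact hsub _
      · rw [hLU]
        have : ((U⁻¹ : (Submodule A C)ˣ) : Submodule A C) =
            Submodule.map f.toLinearMap ((M⁻¹ : (Submodule A B)ˣ) : Submodule A B) := rfl
        rw [this]
        exact hsub _
    · rintro ⟨h1, h2⟩
      exact core L h1 h2
end
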